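/- For all integers n, m, ℓ, i with 0 ≤ m ≤ ⌊n/2⌋ and 0 ≤ ℓ, i ≤ n−2m, the following identity of rational numbers holds: Σ_{k=0}^{ℓ} [(−ℓ)_k · (ℓ+2m+1)_k · (−i)_k] / [k! · (m+1)_k · (−(n−2m))_k] = (−1)^m · T_{m,n}^{(ℓ)}(i) / (C(n−2m,ℓ) · C(2m+ℓ,m)). (The left-hand side is the value at i of the (m,m)-Hahn polynomial of degree ℓ on {0,…,n−2m}.) -/

import Mathlib

open Finset

attribute [local instance] Classical.propDecidable

/-- Stationary distribution of the binary Burnside process. -/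
noncomputable def piDist (n : ℕ) (U : Finset ℕ) : ℝ :=
  1 / ((n + 1) * (n.choose U.card))

/-- Binary Burnside transition matrix entry. -/
noncomputable def Kmat (n : ℕ) (x y : Finset ℕ) : ℝ :=
  (((2 * (n - (x ∪ y).card)).choose (n - (x ∪ y).card) : ℝ) *
      ((2 * ((y \ x).card)).choose ((y \ x).card)) *
      ((2 * ((x \ y).card)).choose ((x \ y).card)) *
      ((2 * ((x ∩ y).card)).choose ((x ∩ y).card))) /
    (4 ^ n * (((n - (x ∪ y).card) + (y \ x).card).choose (n - (x ∪ y).card)) *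
      (((x \ y).card + (x ∩ y).card).choose ((x \ y).card)))

/-- Action of K_n on functions. -/
noncomputable def Kop (n : ℕ) (f : Finset ℕ → ℝ) : Finset ℕ → ℝ :=
  fun x => ∑ y ∈ (Finset.Icc 1 n).powerset, Kmat n x y * f y

/-- s-step transition probabilities. -/
noncomputable def Kpow (n : ℕ) : ℕ → Finset ℕ → Finset ℕ → ℝ
  | 0 => fun x y => if x = y then 1 else 0
  | s + 1 => fun x y => ∑ z ∈ (Finset.Icc 1 n).powerset, Kmat n x z * Kpow n s z y

/-- Chi-square distance to stationarity after s steps, started at x. -/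
noncomputable def chiSq (n s : ℕ) (x : Finset ℕ) : ℝ :=
  ∑ y ∈ (Finset.Icc 1 n).powerset, (Kpow n s x y - piDist n y) ^ 2 / piDist n y

/-- Eigenvalues. -/
noncomputable def betaEV (k : ℕ) : ℝ := (((2 * k).choose k : ℝ)) ^ 2 / 16 ^ k

/-- The eigenvectors f_S of Diaconis–Lin–Ram. -/
noncomputable def fSvec (S : Finset ℕ) : Finset ℕ → ℝ :=
  fun U => (-1 : ℝ) ^ ((S ∩ U).card) * (S.card.choose ((S ∩ U).card))

/-- Inner product with respect to π. -/
noncomputable def innerPi (n : ℕ) (f g : Finset ℕ → ℝ) : ℝ :=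
  ∑ U ∈ (Finset.Icc 1 n).powerset, f U * g U * piDist n U

/-- The scalars T_{m,n}^{(ℓ)}(i). -/
noncomputable def Tcoef (n m ℓ i : ℕ) : ℝ :=
  ∑ j ∈ Finset.range (i + 1),
    if j ≤ ℓ then
      (-1 : ℝ) ^ (m + j) * ((2 * m + ℓ).choose (m + j)) * (i.choose j) *
        ((n - 2 * m - i).choose (ℓ - j))
    else 0

/-- The vector g_T^{m,i} associated to the column reading tableau. -/
noncomputable def gT (n m i : ℕ) : Finset ℕ → ℝ := fun U =>
  if (∀ r ∈ Finset.Icc 1 m, ((2 * r - 1 ∈ U) ↔ ¬(2 * r ∈ U))) ∧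
      (U ∩ Finset.Icc (2 * m + 1) n).card = i then
    (-1 : ℝ) ^ ((U ∩ (Finset.range m).image (fun r => 2 * r + 1)).card)
  else 0

/-- The vector f_T^{m,ℓ} associated to the column reading tableau. -/
noncomputable def fT (n m ℓ : ℕ) : Finset ℕ → ℝ :=
  fun U => ∑ i ∈ Finset.range (n - 2 * m + 1), Tcoef n m ℓ i * gT n m i U

/-- Action of the adjacent transposition s_t (switching t and t+1) on functions. -/
noncomputable def sOp (t : ℕ) (f : Finset ℕ → ℝ) : Finset ℕ → ℝ :=
  fun U => f (U.image (Equiv.swap t (t + 1)))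

/-- The factor s_t − 1/(t − 2r + 2) (r is the 1-indexed position in the second row). -/
noncomputable def tauFactor (r t : ℕ) (f : Finset ℕ → ℝ) : Finset ℕ → ℝ :=
  fun U => sOp t f U - ((t : ℝ) - 2 * r + 2)⁻¹ * f U

/-- Composition (s_{2r+k-1} − ⋯)⋯(s_{2r} − 1/2) of k successive factors. -/
noncomputable def tauComp (r : ℕ) : ℕ → (Finset ℕ → ℝ) → (Finset ℕ → ℝ)
  | 0 => id
  | k + 1 => fun f => tauFactor r (2 * r + k) (tauComp r k f)

/-- τ_Q^{(r)} τ_Q^{(r+1)} ⋯ for the remaining second-row entries. -/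
noncomputable def tauQAux : ℕ → List ℕ → (Finset ℕ → ℝ) → (Finset ℕ → ℝ)
  | _, [] => id
  | r, a :: rest => fun f => tauComp r (a - 2 * r) (tauQAux (r + 1) rest f)

/-- The operator τ_Q for a tableau Q encoded by its list of second-row entries. -/
noncomputable def tauQ (Q : List ℕ) : (Finset ℕ → ℝ) → (Finset ℕ → ℝ) := tauQAux 1 Q

/-- A standard Young tableau of shape (n − Q.length, Q.length), encoded by the strictly
increasing list of second-row entries, each entry a_r satisfying 2r ≤ a_r ≤ n. -/
def IsSYT (n : ℕ) (Q : List ℕ) : Prop :=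
  Q.Chain' (· < ·) ∧ (∀ x ∈ Q, x ≤ n) ∧ ∀ r < Q.length, 2 * (r + 1) ≤ Q.getD r 0

/-- The eigenvectors f_Q^{m,ℓ} (here m = Q.length). -/
noncomputable def fQvec (n : ℕ) (Q : List ℕ) (ℓ : ℕ) : Finset ℕ → ℝ :=
  tauQ Q (fT n Q.length ℓ)

/-- The orthogonal vectors g_Q^{m,i} (here m = Q.length). -/
noncomputable def gQvec (n : ℕ) (Q : List ℕ) (i : ℕ) : Finset ℕ → ℝ :=
  tauQ Q (gT n Q.length i)

/-- The constant γ_Q. -/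
noncomputable def gammaQ (Q : List ℕ) : ℝ :=
  ∏ r ∈ Finset.range Q.length, ∏ c ∈ Finset.Icc 2 (Q.getD r 0 - 2 * (r + 1) + 1),
    ((c : ℝ) ^ 2 - 1) / (c : ℝ) ^ 2

/-- The Murphy (Jucys–Murphy) operator M_r acting on functions. -/
noncomputable def murphy (r : ℕ) (f : Finset ℕ → ℝ) : Finset ℕ → ℝ :=
  fun U => ∑ i ∈ Finset.Icc 1 (r - 1), f (U.image (Equiv.swap i r))

/-- The state space as a finite type. -/
noncomputable def transpEndo (n a b : ℕ) :
    Module.End ℝ ((↥((Finset.Icc 1 n).powerset)) → ℝ) where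
  toFun f U := f (if h : U.1.image (Equiv.swap a b) ∈ (Finset.Icc 1 n).powerset
    then ⟨U.1.image (Equiv.swap a b), h⟩ else U)
  map_add' f g := rfl
  map_smul' c f := rfl

noncomputable def murphyEndo (n r : ℕ) :
    Module.End ℝ ((↥((Finset.Icc 1 n).powerset)) → ℝ) :=
  ∑ i ∈ Finset.Icc 1 (r - 1), transpEndo n i r

noncomputable def KEndo (n : ℕ) :
    Module.End ℝ ((↥((Finset.Icc 1 n).powerset)) → ℝ) where
  toFun f x := ∑ y : ↥((Finset.Icc 1 n).powerset), Kmat n x.1 y.1 * f y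
  map_add' f g := by funext x; simp [mul_add, Finset.sum_add_distrib]
  map_smul' c f := by funext x; simp [Finset.mul_sum, mul_left_comm]


/-- The rising factorial (a)_k over ℚ. -/
def risingFac (a : ℚ) (k : ℕ) : ℚ := ∏ j ∈ Finset.range k, (a + j)

/-- The scalars T_{m,n}^{(ℓ)}(i), as rational numbers. -/
def TcoefQ (n m ℓ i : ℕ) : ℚ :=
  ∑ j ∈ Finset.range (i + 1),
    if j ≤ ℓ then
      (-1 : ℚ) ^ (m + j) * ((2 * m + ℓ).choose (m + j)) * (i.choose j) *
        ((n - 2 * m - i).choose (ℓ - j))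
    else 0

section HahnHelpers

lemma risingFac_zero (a : ℚ) : risingFac a 0 = 1 := rfl

lemma risingFac_succ (a : ℚ) (k : ℕ) : risingFac a (k+1) = risingFac a k * (a + k) :=
  Finset.prod_range_succ _ _

lemma risingFac_neg (x k : ℕ) :
    risingFac (-(x:ℚ)) k = (-1)^k * k.factorial * x.choose k := by
  induction k with
  | zero => simp [risingFac_zero]
  | succ k ih =>
    rw [risingFac_succ, ih]
    rcases lt_or_ge k x with h | h
    · have h1 : (x.choose (k+1) : ℚ) * (k+1) = x.choose k * (x - k) := by
        have hc : (x.choose (k+1) * (k+1) : ℕ) = x.choose k * (x - k) :=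
          Nat.choose_succ_right_eq x k
        have h2 : (x.choose (k+1) * (k+1) : ℚ) = (x.choose k : ℚ) * ((x - k : ℕ) : ℚ) := by
          exact_mod_cast congrArg (fun z : ℕ => (z : ℚ)) hc
        rw [h2, Nat.cast_sub h.le]
      rw [pow_succ]
      push_cast [Nat.factorial_succ]
      linear_combination ((-1:ℚ))^k * (k.factorial:ℚ) * h1
    · have hx1 : x.choose (k+1) = 0 := Nat.choose_eq_zero_of_lt (by omega)
      rcases eq_or_lt_of_le h with rfl | h2
      · simp [hx1]
      · have hx0 : x.choose k = 0 := Nat.choose_eq_zero_of_lt h2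
        simp [hx0, hx1]

lemma risingFac_pos (c k : ℕ) :
    risingFac ((c:ℚ)+1) k = k.factorial * (c+k).choose k := by
  induction k with
  | zero => simp [risingFac_zero]
  | succ k ih =>
    rw [risingFac_succ, ih, show c + (k+1) = c + k + 1 from rfl, Nat.factorial_succ]
    have h4 : ((c:ℚ)+k+1) * ((c+k).choose k) = ((c+k+1).choose (k+1)) * (k+1) := by
      exact_mod_cast congrArg (fun z : ℕ => (z : ℚ)) (Nat.add_one_mul_choose_eq (c+k) k)
    simp only [Nat.cast_mul, Nat.cast_add, Nat.cast_one]
    linear_combination (k.factorial : ℚ) * h4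

lemma term_eval (m ℓ i N k : ℕ) (hkℓ : k ≤ ℓ) (hℓN : ℓ ≤ N) :
    risingFac (-(ℓ:ℚ)) k * risingFac ((ℓ:ℚ) + 2*m + 1) k * risingFac (-(i:ℚ)) k /
      ((k.factorial : ℚ) * risingFac ((m:ℚ)+1) k * risingFac (-(N:ℚ)) k)
    = (-1:ℚ)^k * (i.choose k) * ((2*m+ℓ+k).choose (m+k)) * (ℓ.choose k)
      / (((2*m+ℓ).choose m) * (N.choose k)) := by
  have e1 : (ℓ:ℚ) + 2*m + 1 = ((2*m+ℓ : ℕ):ℚ) + 1 := by push_cast; ring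
  rw [e1, risingFac_neg ℓ k, risingFac_neg i k, risingFac_neg N k, risingFac_pos (2*m+ℓ) k,
    risingFac_pos m k]
  have key : ((2*m+ℓ+k).choose k : ℚ) * ((2*m+ℓ).choose m)
      = ((2*m+ℓ+k).choose (m+k)) * ((m+k).choose k) := by
    have h := Nat.choose_mul (n := 2*m+ℓ+k) (k := m+k) (s := k) (by omega)
    rw [show 2*m+ℓ+k - k = 2*m+ℓ from by omega, show m+k-k = m from by omega] at h
    exact_mod_cast congrArg (fun z : ℕ => (z : ℚ)) h.symm
  have hf : (k.factorial : ℚ) ≠ 0 := Nat.cast_ne_zero.mpr k.factorial_pos.ne'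
  have hmk : ((m+k).choose k : ℚ) ≠ 0 := Nat.cast_ne_zero.mpr (Nat.choose_pos (by omega)).ne'
  have hN : ((N).choose k : ℚ) ≠ 0 := Nat.cast_ne_zero.mpr (Nat.choose_pos (by omega)).ne'
  have hcm : (((2*m+ℓ).choose m) : ℚ) ≠ 0 := Nat.cast_ne_zero.mpr (Nat.choose_pos (by omega)).ne'
  have hs : ((-1:ℚ))^k ≠ 0 := pow_ne_zero _ (by norm_num)
  rw [div_eq_div_iff (by positivity) (by positivity)]
  push_cast
  linear_combination ((-1:ℚ))^k * ((-1:ℚ))^k * (k.factorial:ℚ)^3 * (ℓ.choose k : ℚ) * (i.choose k : ℚ) * (N.choose k : ℚ) * key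

lemma vand (M mm k : ℕ) :
    (k + M).choose (mm + k) = ∑ j ∈ range (k+1), k.choose j * M.choose (mm + j) := by
  rw [Nat.add_choose_eq, Finset.Nat.sum_antidiagonal_eq_sum_range_succ_mk]
  rw [Nat.succ_eq_add_one, show mm + k + 1 = (k+1) + mm from by omega]
  rw [Finset.sum_range_add]
  have h2 : ∀ x ∈ range mm, k.choose (k + 1 + x) * M.choose (mm + k - (k + 1 + x)) = 0 := by
    intro x _; rw [Nat.choose_eq_zero_of_lt (by omega), Nat.zero_mul]
  rw [Finset.sum_congr rfl h2, Finset.sum_const, smul_zero, Nat.add_zero]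
  rw [← Finset.sum_range_reflect]
  refine Finset.sum_congr rfl fun j hj => ?_
  rw [Finset.mem_range] at hj
  have hjk : j ≤ k := by omega
  rw [show k + 1 - 1 - j = k - j from by omega, Nat.choose_symm hjk,
    show mm + k - (k - j) = mm + j from by omega]

lemma alt_vand (a : ℕ) : ∀ b c : ℕ, a ≤ b →
    ∑ t ∈ range (c+1), (-1:ℚ)^t * (a.choose t) * ((b-t).choose (c-t)) = ((b-a).choose c) := by
  induction a with
  | zero =>
    intro b c _
    rw [Finset.sum_eq_single 0]
    · simp
    · intro t _ ht
      rw [Nat.choose_eq_zero_of_lt (by omega)]; push_cast; ring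
    · intro h; simp at h
  | succ a ih =>
    intro b c hab
    match c with
    | 0 => simp
    | c + 1 =>
      have key : ∀ t ∈ range (c+1),
          (-1:ℚ)^(t+1) * ((a+1).choose (t+1)) * ((b-(t+1)).choose (c+1-(t+1))) =
          (-1:ℚ)^(t+1) * (a.choose (t+1)) * ((b-(t+1)).choose (c+1-(t+1)))
          - (-1:ℚ)^t * (a.choose t) * (((b-1)-t).choose (c-t)) := by
        intro t _
        rw [Nat.choose_succ_succ a t]
        have e1 : b - (t+1) = (b-1) - t := by omega
        have e2 : c + 1 - (t+1) = c - t := by omega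
        rw [e1, e2]
        push_cast
        ring
      have h1 : ∑ t ∈ range (c+2), (-1:ℚ)^t * (a.choose t) * ((b-t).choose (c+1-t))
          = (∑ t ∈ range (c+1),
              (-1:ℚ)^(t+1) * (a.choose (t+1)) * ((b-(t+1)).choose (c+1-(t+1))))
            + (-1:ℚ)^0 * (a.choose 0) * ((b-0).choose (c+1-0)) :=
        Finset.sum_range_succ' _ _
      have hb1 : a ≤ b - 1 := by omega
      rw [Finset.sum_range_succ' _ (c+1), Finset.sum_congr rfl key, Finset.sum_sub_distrib]
      calc _ = (∑ t ∈ range (c+2), (-1:ℚ)^t * (a.choose t) * ((b-t).choose (c+1-t)))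
              - ∑ t ∈ range (c+1), (-1:ℚ)^t * (a.choose t) * (((b-1)-t).choose (c-t)) := by
            rw [h1]; simp [Nat.choose_zero_right]; ring
        _ = ((b-a).choose (c+1) : ℚ) - (((b-1)-a).choose c : ℚ) := by
            rw [ih b (c+1) (by omega), ih (b-1) c hb1]
        _ = ((b-(a+1)).choose (c+1) : ℚ) := by
            have e3 : b - a = (b - (a+1)) + 1 := by omega
            have e4 : b - 1 - a = b - (a+1) := by omega
            rw [e3, e4, Nat.choose_succ_succ]
            push_cast; ring

lemma cc (i j t : ℕ) : i.choose (j+t) * (j+t).choose j = i.choose j * (i-j).choose t := by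
  rcases le_or_gt (j+t) i with h | h
  · have h2 := Nat.choose_mul (n := i) (k := j+t) (s := j) (by omega)
    rwa [show j+t-j = t from by omega] at h2
  · rcases le_or_gt j i with h2 | h2
    · rw [Nat.choose_eq_zero_of_lt h, Nat.choose_eq_zero_of_lt (show i - j < t from by omega),
        Nat.zero_mul, Nat.mul_zero]
    · rw [Nat.choose_eq_zero_of_lt h, Nat.choose_eq_zero_of_lt h2, Nat.zero_mul, Nat.zero_mul]

lemma inner_eval (m ℓ i N j : ℕ) (hj : j ≤ ℓ) (hℓN : ℓ ≤ N) (hiN : i ≤ N) :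
    ∑ k ∈ range (ℓ+1), (if j ≤ k then
        (-1:ℚ)^k * (i.choose k) * (k.choose j) * (((2*m+ℓ).choose (m+j)) : ℚ) *
          ((N-k).choose (ℓ-k)) else 0)
    = (-1:ℚ)^j * ((2*m+ℓ).choose (m+j)) * (i.choose j) * ((N-i).choose (ℓ-j)) := by
  rw [← Finset.sum_filter,
    show (range (ℓ+1)).filter (fun k => j ≤ k) = Ico j (ℓ+1) from by ext x; simp; omega,
    Finset.sum_Ico_eq_sum_range, show ℓ+1-j = (ℓ-j)+1 from by omega]
  have congr1 : ∀ t ∈ range ((ℓ-j)+1),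
      (-1:ℚ)^(j+t) * (i.choose (j+t)) * ((j+t).choose j) * (((2*m+ℓ).choose (m+j)) : ℚ) *
        ((N-(j+t)).choose (ℓ-(j+t)))
      = ((-1:ℚ)^j * (i.choose j) * ((2*m+ℓ).choose (m+j))) *
        ((-1:ℚ)^t * ((i-j).choose t) * (((N-j)-t).choose ((ℓ-j)-t))) := by
    intro t ht
    have hcc : ((i.choose (j+t) : ℚ)) * ((j+t).choose j) = (i.choose j) * ((i-j).choose t) := by
      exact_mod_cast congrArg (fun z : ℕ => (z : ℚ)) (cc i j t)
    rw [pow_add, show N-(j+t) = (N-j)-t from by omega, show ℓ-(j+t) = (ℓ-j)-t from by omega]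
    linear_combination ((-1:ℚ)^j * (-1:ℚ)^t * (((N-j)-t).choose ((ℓ-j)-t) : ℚ) *
      (((2*m+ℓ).choose (m+j)) : ℚ)) * hcc
  rw [Finset.sum_congr rfl congr1, ← Finset.mul_sum, alt_vand (i-j) (N-j) (ℓ-j) (by omega)]
  rcases le_or_gt j i with h | h
  · rw [show (N-j)-(i-j) = N-i from by omega]; ring
  · rw [Nat.choose_eq_zero_of_lt h]; push_cast; ring

lemma S1_eq_S2 (m ℓ i N : ℕ) (hℓN : ℓ ≤ N) (hiN : i ≤ N) :
    ∑ k ∈ range (ℓ+1),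
        (-1:ℚ)^k * (i.choose k) * ((2*m+ℓ+k).choose (m+k)) * ((N-k).choose (ℓ-k))
    = ∑ j ∈ range (ℓ+1),
        (-1:ℚ)^j * ((2*m+ℓ).choose (m+j)) * (i.choose j) * ((N-i).choose (ℓ-j)) := by
  have expand : ∀ k ∈ range (ℓ+1),
      (-1:ℚ)^k * (i.choose k) * ((2*m+ℓ+k).choose (m+k)) * ((N-k).choose (ℓ-k))
      = ∑ j ∈ range (ℓ+1), (if j ≤ k then
          (-1:ℚ)^k * (i.choose k) * (k.choose j) * (((2*m+ℓ).choose (m+j)) : ℚ) *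
            ((N-k).choose (ℓ-k)) else 0) := by
    intro k hk
    rw [mem_range] at hk
    have hv : ((2*m+ℓ+k).choose (m+k) : ℚ)
        = ∑ j ∈ range (k+1), (k.choose j : ℚ) * ((2*m+ℓ).choose (m+j)) := by
      have h := vand (2*m+ℓ) m k
      rw [show k + (2*m+ℓ) = 2*m+ℓ+k from by omega] at h
      exact_mod_cast h
    rw [hv, Finset.mul_sum, Finset.sum_mul,
      show range (k+1) = (range (ℓ+1)).filter (fun j => j ≤ k) from by ext x; simp; omega,
      Finset.sum_filter]
    refine Finset.sum_congr rfl fun j hj => ?_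
    split
    · ring
    · rfl
  rw [Finset.sum_congr rfl expand, Finset.sum_comm]
  refine Finset.sum_congr rfl fun j hj => ?_
  rw [mem_range] at hj
  exact inner_eval m ℓ i N j (by omega) hℓN hiN

end HahnHelpers

/-- the (m,m)-Hahn polynomial of degree ℓ on {0,…,n−2m}, evaluated at i,
equals (−1)^m T_{m,n}^{(ℓ)}(i) / (C(n−2m,ℓ)·C(2m+ℓ,m)). -/
theorem hahn_eq_Tcoef (n m ℓ i : ℕ) (hm : 2 * m ≤ n) (hℓ : ℓ ≤ n - 2 * m)
    (hi : i ≤ n - 2 * m) :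
    (∑ k ∈ Finset.range (ℓ + 1),
        risingFac (-(ℓ : ℚ)) k * risingFac ((ℓ : ℚ) + 2 * m + 1) k *
            risingFac (-(i : ℚ)) k /
          ((k.factorial : ℚ) * risingFac ((m : ℚ) + 1) k *
            risingFac (-((n - 2 * m : ℕ) : ℚ)) k)) =
      (-1 : ℚ) ^ m * TcoefQ n m ℓ i /
        (((n - 2 * m).choose ℓ : ℚ) * ((2 * m + ℓ).choose m)) := by
  set N := n - 2 * m with hNdef
  have hD1 : (N.choose ℓ : ℚ) ≠ 0 := Nat.cast_ne_zero.mpr (Nat.choose_pos hℓ).ne'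
  have hD2 : (((2*m+ℓ).choose m) : ℚ) ≠ 0 :=
    Nat.cast_ne_zero.mpr (Nat.choose_pos (by omega)).ne'
  rw [eq_div_iff (mul_ne_zero hD1 hD2), Finset.sum_mul]
  have step1 : ∀ k ∈ range (ℓ+1),
      (risingFac (-(ℓ:ℚ)) k * risingFac ((ℓ:ℚ) + 2*m + 1) k * risingFac (-(i:ℚ)) k /
        ((k.factorial : ℚ) * risingFac ((m:ℚ)+1) k * risingFac (-(N:ℚ)) k)) *
        ((N.choose ℓ : ℚ) * ((2*m+ℓ).choose m))
      = (-1:ℚ)^k * (i.choose k) * ((2*m+ℓ+k).choose (m+k)) * ((N-k).choose (ℓ-k)) := by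
    intro k hk
    rw [mem_range] at hk
    rw [term_eval m ℓ i N k (by omega) hℓ]
    have hNk : (N.choose k : ℚ) ≠ 0 := Nat.cast_ne_zero.mpr (Nat.choose_pos (by omega)).ne'
    have I2 : ((N.choose ℓ : ℚ)) * (ℓ.choose k) = (N.choose k) * ((N-k).choose (ℓ-k)) := by
      exact_mod_cast congrArg (fun z : ℕ => (z : ℚ))
        (Nat.choose_mul (n := N) (k := ℓ) (s := k) (by omega))
    field_simp
    linear_combination ((i.choose k : ℚ) * (((2*m+ℓ+k).choose (m+k)) : ℚ)) * I2
  rw [Finset.sum_congr rfl step1, S1_eq_S2 m ℓ i N hℓ hi, TcoefQ]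
  have hsq : ((-1:ℚ))^m * ((-1:ℚ))^m = 1 := by
    rw [← pow_add]; exact Even.neg_one_pow ⟨m, rfl⟩
  rw [Finset.mul_sum]
  have congr2 : ∀ j ∈ range (i+1),
      ((-1:ℚ))^m * (if j ≤ ℓ then (-1:ℚ)^(m+j) * ((2*m+ℓ).choose (m+j)) * (i.choose j) *
          ((N - i).choose (ℓ-j)) else 0)
      = (if j ≤ ℓ then (-1:ℚ)^j * ((2*m+ℓ).choose (m+j)) * (i.choose j) *
          ((N-i).choose (ℓ-j)) else 0) := by
    intro j hj
    split
    · rw [pow_add]; linear_combination ((-1:ℚ)^j * (((2*m+ℓ).choose (m+j)) : ℚ) *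
        ((i.choose j) : ℚ) * (((N-i).choose (ℓ-j)) : ℚ)) * hsq
    · rw [mul_zero]
  rw [Finset.sum_congr rfl congr2, ← Finset.sum_filter]
  refine (Finset.sum_subset ?_ ?_).symm
  · intro x hx
    simp only [mem_filter, mem_range] at hx ⊢
    omega
  · intro x hx hnx
    simp only [mem_filter, mem_range] at hx hnx
    have hix : i < x := by omega
    rw [Nat.choose_eq_zero_of_lt hix]
    push_cast; ring
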